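/- Let G be a countably infinite group, H a compact metrizable topological group whose topology is induced by a left-invariant metric, with normalized Haar probability measure ν, and τ : G → H an injective group homomorphism with dense image. Then there exists a family (A(t))_{t∈[0,1]} of subsets of H such that A(0) = ∅, A(1) = H, each A(t) is compact with A(t) = closure(interior A(t)), ∂A(t) ∩ τ(G) = ∅, and ν(∂A(t)) = 0, and the path t ↦ A(t) is continuous with respect to the pseudometric D̄(A,B) = ν(closure(A Δ B)): for every ε > 0 there is δ > 0 such that |t−s| < δ implies ν(closure(A(t) Δ A(s))) < ε. -/

import Mathlib

open MeasureTheory Filter Set Topology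
open scoped symmDiff ENNReal

set_option linter.unusedSectionVars false
set_option maxHeartbeats 1000000

namespace S15

variable {H : Type*} [MetricSpace H] [CompactSpace H]
  [MeasurableSpace H] [BorelSpace H]

/-- A "nice window": compact, proper, with null boundary, such that every point of the range
of `τ` belonging to it is in its interior. -/
structure Nice {G : Type*} (ν : Measure H) (τ : G → H) (S : Set H) : Prop where
  compact : IsCompact S
  proper : S = closure (interior S)
  nullfr : ν (frontier S) = 0
  gen : ∀ g : G, τ g ∈ S → τ g ∈ interior S

variable {G : Type*} {ν : Measure H} {τ : G → H}

lemma Nice.closed {S : Set H} (h : Nice ν τ S) : IsClosed S := h.compact.isClosed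

lemma Nice.measurable {S : Set H} (h : Nice ν τ S) : MeasurableSet S :=
  h.closed.measurableSet

lemma Nice.meas_interior {S : Set H} (h : Nice ν τ S) : ν (interior S) = ν S := by
  apply le_antisymm (measure_mono interior_subset)
  calc ν S ≤ ν (interior S ∪ frontier S) := by
        apply measure_mono
        intro x hx
        by_cases hi : x ∈ interior S
        · exact Or.inl hi
        · exact Or.inr ⟨subset_closure hx, hi⟩
    _ ≤ ν (interior S) + ν (frontier S) := measure_union_le _ _
    _ = ν (interior S) := by rw [h.nullfr, add_zero]

lemma Nice.union {S T : Set H} (hS : Nice ν τ S) (hT : Nice ν τ T) : Nice ν τ (S ∪ T) := by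
  refine ⟨hS.compact.union hT.compact, ?_, ?_, ?_⟩
  · apply subset_antisymm
    · apply Set.union_subset
      · calc S = closure (interior S) := hS.proper
          _ ⊆ closure (interior (S ∪ T)) :=
            closure_mono (interior_mono subset_union_left)
      · calc T = closure (interior T) := hT.proper
          _ ⊆ closure (interior (S ∪ T)) :=
            closure_mono (interior_mono subset_union_right)
    · calc closure (interior (S ∪ T)) ⊆ closure (S ∪ T) := closure_mono interior_subset
        _ = S ∪ T := (hS.closed.union hT.closed).closure_eq
  · refine measure_mono_null ?_ (measure_union_null hS.nullfr hT.nullfr)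
    exact subset_trans (frontier_union_subset S T)
      (Set.union_subset_union Set.inter_subset_left Set.inter_subset_right)
  · intro g hg
    rcases hg with hg | hg
    · exact interior_mono subset_union_left (hS.gen g hg)
    · exact interior_mono subset_union_right (hT.gen g hg)

lemma nice_empty : Nice ν τ (∅ : Set H) := ⟨isCompact_empty, by simp, by simp, by simp⟩

lemma nice_univ : Nice ν τ (Set.univ : Set H) := ⟨isCompact_univ, by simp, by simp, by simp⟩

/-- Choice of a good radius: small measure closed ball, null sphere, sphere avoiding the
countable set `range τ`. -/
lemma exists_good_radius [Countable G] (ν : Measure H) [IsFiniteMeasure ν]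
    [NullSingletonClass ν] (τ : G → H) (x : H) {ε : ℝ} (hε : 0 < ε) {η : ℝ≥0∞} (hη : 0 < η) :
    ∃ r : ℝ, 0 < r ∧ r < ε ∧ ν (Metric.sphere x r) = 0 ∧ (∀ g, dist (τ g) x ≠ r) ∧
      ν (Metric.closedBall x r) < η := by
  have hiter : Tendsto (fun n : ℕ => ν (Metric.closedBall x ((1:ℝ)/(n+1)))) atTop
      (𝓝 (ν (⋂ n : ℕ, Metric.closedBall x ((1:ℝ)/(n+1))))) := by
    apply tendsto_measure_iInter_atTop
    · exact fun n => Metric.isClosed_closedBall.measurableSet.nullMeasurableSet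
    · intro m n hmn
      apply Metric.closedBall_subset_closedBall
      gcongr
    · exact ⟨0, measure_ne_top ν _⟩
  have hcap : (⋂ n : ℕ, Metric.closedBall x ((1:ℝ)/(n+1))) = {x} := by
    apply subset_antisymm
    · intro y hy
      simp only [Set.mem_iInter, Metric.mem_closedBall] at hy
      have : dist y x ≤ 0 := by
        by_contra hcon
        push_neg at hcon
        obtain ⟨n, hn⟩ := exists_nat_one_div_lt hcon
        exact absurd (hy n) (by push_neg; exact hn)
      exact dist_le_zero.1 this
    · intro y hy
      simp only [Set.mem_singleton_iff] at hy
      subst hy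
      simp only [Set.mem_iInter, Metric.mem_closedBall, dist_self]
      intro n; positivity
  rw [hcap, measure_singleton] at hiter
  have hev : ∀ᶠ n : ℕ in atTop, ν (Metric.closedBall x ((1:ℝ)/(n+1))) < η :=
    hiter.eventually_lt_const hη
  obtain ⟨N, hN⟩ := hev.exists
  set ε₀ : ℝ := min ((1:ℝ)/(N+1)) ε with hε₀def
  have hε₀ : 0 < ε₀ := lt_min (by positivity) hε
  have hB1 : Set.Countable {r : ℝ | 0 < ν (Metric.sphere x r)} := by
    apply Measure.countable_meas_pos_of_disjoint_iUnion (μ := ν)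
      (As := fun r : ℝ => Metric.sphere x r)
    · exact fun r => Metric.isClosed_sphere.measurableSet
    · intro r s hrs
      simp only [Function.onFun]
      apply Set.disjoint_left.2
      intro y hy hy'
      simp only [Metric.mem_sphere] at hy hy'
      exact hrs (hy ▸ hy')
  have hB2 : Set.Countable (Set.range fun g : G => dist (τ g) x) := Set.countable_range _
  have hbig : ¬ (Set.Ioo 0 ε₀ ⊆ {r : ℝ | 0 < ν (Metric.sphere x r)} ∪
      (Set.range fun g : G => dist (τ g) x)) := by
    intro hsub
    have h0 : volume (Set.Ioo (0:ℝ) ε₀) = 0 :=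
      measure_mono_null hsub ((hB1.union hB2).measure_zero volume)
    rw [Real.volume_Ioo] at h0
    simp only [sub_zero] at h0
    exact absurd h0 (by simp [ENNReal.ofReal_eq_zero, not_le, hε₀])
  rw [Set.not_subset] at hbig
  obtain ⟨r, hrIoo, hrbad⟩ := hbig
  simp only [Set.mem_union, Set.mem_setOf_eq, Set.mem_range, not_or, not_exists] at hrbad
  refine ⟨r, hrIoo.1, lt_of_lt_of_le hrIoo.2 (min_le_right _ _), ?_, fun g => hrbad.2 g, ?_⟩
  · by_contra hcon
    exact hrbad.1 (pos_iff_ne_zero.2 hcon)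
  · refine lt_of_le_of_lt ?_ hN
    apply measure_mono
    apply Metric.closedBall_subset_closedBall
    exact le_of_lt (lt_of_lt_of_le hrIoo.2 (min_le_left _ _))

/-- Inner approximation of open sets by closed subsets, for finite measures on metric spaces. -/
lemma exists_closed_approx (ν : Measure H) [IsFiniteMeasure ν] {U : Set H} (hU : IsOpen U)
    {a : ℝ≥0∞} (ha : a < ν U) : ∃ C : Set H, IsClosed C ∧ C ⊆ U ∧ a < ν C := by
  set K : ℕ → Set H := fun n => (Metric.thickening ((1:ℝ)/(n+1)) Uᶜ)ᶜ with hK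
  have hKsub : ∀ n, K n ⊆ U := by
    intro n y hy
    by_contra hyU
    exact hy (Metric.self_subset_thickening (by positivity) Uᶜ hyU)
  have hKmono : Monotone K := by
    intro m n hmn
    apply Set.compl_subset_compl.2
    apply Metric.thickening_mono
    gcongr
  have hKcup : (⋃ n, K n) = U := by
    apply subset_antisymm (Set.iUnion_subset hKsub)
    intro y hy
    have hpos : 0 < EMetric.infEdist y Uᶜ := by
      show 0 < Metric.infEDist y Uᶜ
      rw [Metric.infEDist_pos_iff_notMem_closure]
      rw [hU.isClosed_compl.closure_eq]
      simpa using hy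
    obtain ⟨n, hn⟩ : ∃ n : ℕ, ENNReal.ofReal ((1:ℝ)/(n+1)) ≤ EMetric.infEdist y Uᶜ := by
      rcases lt_or_ge (EMetric.infEdist y Uᶜ) ⊤ with htop | htop
      · obtain ⟨n, hn⟩ := exists_nat_one_div_lt (ENNReal.toReal_pos (ne_of_gt hpos) (ne_of_lt htop))
        exact ⟨n, by
          rw [← ENNReal.ofReal_toReal (ne_of_lt htop)]
          exact ENNReal.ofReal_le_ofReal hn.le⟩
      · exact ⟨0, le_trans le_top htop⟩
    refine Set.mem_iUnion.2 ⟨n, ?_⟩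
    intro hcon
    rw [Metric.mem_thickening_iff_infEdist_lt] at hcon
    exact absurd hn (not_le.2 hcon)
  have := tendsto_measure_iUnion_atTop (μ := ν) hKmono
  rw [hKcup] at this
  have hev := this.eventually_const_lt (f := ν ∘ K) ha
  obtain ⟨n, hn⟩ := hev.exists
  exact ⟨K n, (Metric.isOpen_thickening).isClosed_compl, hKsub n, hn⟩

/-- Crossing lemma for a sequence of partial measures. -/
lemma cross_lemma {a η : ℝ≥0∞} (f : ℕ → ℝ≥0∞) (h0 : f 0 = 0) {N : ℕ}
    (hstep : ∀ j < N, f (j+1) ≤ f j + η) (hN : a < f N) :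
    ∃ j ≤ N, a < f j ∧ f j ≤ a + η := by
  induction N with
  | zero => rw [h0] at hN; exact absurd hN (by simp)
  | succ n ih =>
    by_cases hc : a < f n
    · obtain ⟨j, hj1, hj2⟩ := ih (fun j hj => hstep j (Nat.lt_succ_of_lt hj)) hc
      exact ⟨j, Nat.le_succ_of_le hj1, hj2⟩
    · push_neg at hc
      refine ⟨n+1, le_refl _, hN, ?_⟩
      calc f (n+1) ≤ f n + η := hstep n (Nat.lt_succ_self n)
        _ ≤ a + η := by gcongr

/-- Fill an open set by a nice window of prescribed measure, up to `η`. -/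
lemma fill [Countable G] (ν : Measure H) [IsFiniteMeasure ν] [NullSingletonClass ν]
    (τ : G → H) {U : Set H} (hU : IsOpen U) {a η : ℝ≥0∞} (hη : 0 < η) (ha : a < ν U) :
    ∃ K : Set H, Nice ν τ K ∧ K ⊆ U ∧ a < ν K ∧ ν K ≤ a + η := by
  obtain ⟨C, hCcl, hCU, hCa⟩ := exists_closed_approx ν hU ha
  have hCcomp : IsCompact C := hCcl.isCompact
  have hCne : C.Nonempty := by
    rcases Set.eq_empty_or_nonempty C with h | h
    · rw [h] at hCa; simp at hCa
    · exact h
  obtain ⟨x₀, hx₀⟩ := hCne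
  have hrad : ∀ x ∈ C, ∃ rr : ℝ, 0 < rr ∧ ν (Metric.sphere x rr) = 0 ∧
      (∀ g, dist (τ g) x ≠ rr) ∧ ν (Metric.closedBall x rr) < η ∧
      Metric.closedBall x rr ⊆ U := by
    intro x hx
    obtain ⟨εx, hεx, hball⟩ := Metric.isOpen_iff.1 hU x (hCU hx)
    obtain ⟨rr, h1, h2, h3, h4, h5⟩ := exists_good_radius ν τ x hεx hη
    exact ⟨rr, h1, h3, h4, h5, subset_trans (Metric.closedBall_subset_ball h2) hball⟩
  choose! r hr1 hr2 hr3 hr4 hr5 using hrad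
  have hcover : C ⊆ ⋃ x ∈ C, Metric.ball x (r x) := fun x hx =>
    Set.mem_biUnion hx (Metric.mem_ball_self (hr1 x hx))
  obtain ⟨b, hbC, hbfin, hbcov⟩ :=
    hCcomp.elim_finite_subcover_image (fun x _ => Metric.isOpen_ball) hcover
  classical
  set L : List H := hbfin.toFinset.toList with hL
  set n : ℕ := L.length with hn
  set p : ℕ → H := fun i => L.getD i x₀ with hp
  have hpb : ∀ i < n, p i ∈ b := by
    intro i hi
    have h1 : p i = L[i]'(by omega) := List.getD_eq_getElem L x₀ (by omega)
    have h2 : L[i]'(by omega) ∈ L := List.getElem_mem _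
    rw [h1]
    have h3 : L[i]'(by omega) ∈ hbfin.toFinset := Finset.mem_toList.1 h2
    exact hbfin.mem_toFinset.1 h3
  set KK : ℕ → Set H := fun j => ⋃ (i : ℕ) (_ : i < j), closure (Metric.ball (p i) (r (p i)))
    with hKK
  have hK0 : ν (KK 0) = 0 := by simp [hKK]
  have hKmono : ∀ j k, j ≤ k → KK j ⊆ KK k := by
    intro j k hjk
    apply Set.iUnion₂_subset
    intro i hi
    intro x hx
    exact Set.mem_iUnion₂.2 ⟨i, lt_of_lt_of_le hi hjk, hx⟩
  have hKstep : ∀ j < n, ν (KK (j+1)) ≤ ν (KK j) + η := by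
    intro j hj
    have hsub : KK (j+1) ⊆ KK j ∪ closure (Metric.ball (p j) (r (p j))) := by
      apply Set.iUnion₂_subset
      intro i hi
      rcases Nat.lt_succ_iff_lt_or_eq.1 hi with h | h
      · intro x hx
        exact Or.inl (Set.mem_iUnion₂.2 ⟨i, h, hx⟩)
      · subst h; exact Set.subset_union_right
    refine le_trans (measure_mono hsub) (le_trans (measure_union_le _ _) ?_)
    gcongr
    calc ν (closure (Metric.ball (p j) (r (p j))))
        ≤ ν (Metric.closedBall (p j) (r (p j))) :=
          measure_mono Metric.closure_ball_subset_closedBall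
      _ ≤ η := le_of_lt (hr4 (p j) (hbC (hpb j hj)))
  have hCsub : C ⊆ KK n := by
    intro x hx
    obtain ⟨y, hyb, hxy⟩ := Set.mem_iUnion₂.1 (hbcov hx)
    have hyL : y ∈ L := by
      rw [hL]
      exact Finset.mem_toList.2 (hbfin.mem_toFinset.2 hyb)
    obtain ⟨i, hilen, hiy⟩ := List.mem_iff_getElem.1 hyL
    have hpi : p i = y := by
      rw [hp]; simp only []
      rw [List.getD_eq_getElem L x₀ hilen]
      exact hiy
    apply Set.mem_iUnion₂.2
    refine ⟨i, by rw [hn]; exact hilen, ?_⟩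
    rw [hpi]
    exact subset_closure hxy
  obtain ⟨j, hjn, hja, hjb⟩ := cross_lemma (fun j => ν (KK j)) hK0 hKstep
    (lt_of_lt_of_le hCa (measure_mono hCsub))
  have hbrick : ∀ i < j, p i ∈ C := fun i hi => hbC (hpb i (lt_of_lt_of_le hi hjn))
  have hKcl : IsClosed (KK j) := by
    have : KK j = ⋃ i ∈ Set.Iio j, closure (Metric.ball (p i) (r (p i))) := rfl
    rw [this]
    exact (Set.finite_Iio j).isClosed_biUnion (fun i _ => isClosed_closure)
  have hKU : KK j ⊆ U := by
    apply Set.iUnion₂_subset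
    intro i hi
    exact subset_trans Metric.closure_ball_subset_closedBall (hr5 _ (hbrick i hi))
  have hKint : ∀ i < j, Metric.ball (p i) (r (p i)) ⊆ interior (KK j) := by
    intro i hi
    apply interior_maximal ?_ Metric.isOpen_ball
    intro x hx
    exact Set.mem_iUnion₂.2 ⟨i, hi, subset_closure hx⟩
  have hKmem : ∀ x ∈ KK j, x ∈ interior (KK j) ∨
      ∃ i < j, x ∈ Metric.sphere (p i) (r (p i)) := by
    intro x hx
    obtain ⟨i, hi, hxi⟩ := Set.mem_iUnion₂.1 hx
    have hxi' : x ∈ Metric.closedBall (p i) (r (p i)) :=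
      Metric.closure_ball_subset_closedBall hxi
    rcases eq_or_lt_of_le (Metric.mem_closedBall.1 hxi') with he | hl
    · exact Or.inr ⟨i, hi, he⟩
    · exact Or.inl (hKint i hi (Metric.mem_ball.2 hl))
  refine ⟨KK j, ⟨hKcl.isCompact, ?_, ?_, ?_⟩, hKU, hja, hjb⟩
  · apply subset_antisymm
    · intro x hx
      rcases hKmem x hx with h | h
      · exact subset_closure h
      · obtain ⟨i, hi, _⟩ := h
        obtain ⟨ii, hii, hxi⟩ := Set.mem_iUnion₂.1 hx
        exact closure_mono (hKint ii hii) hxi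
    · exact closure_minimal interior_subset hKcl
  · rw [hKcl.frontier_eq]
    apply measure_mono_null (t := ⋃ i ∈ Set.Iio j, Metric.sphere (p i) (r (p i)))
    · intro x hx
      have hx1 : x ∈ KK j := hx.1
      rcases hKmem x hx1 with h | h
      · exact absurd h hx.2
      · obtain ⟨i, hi, hs⟩ := h
        exact Set.mem_iUnion₂.2 ⟨i, hi, hs⟩
    · rw [measure_biUnion_null_iff (Set.finite_Iio j).countable]
      exact fun i hi => hr2 _ (hbrick i hi)
  · intro g hg
    obtain ⟨i, hi, hxi⟩ := Set.mem_iUnion₂.1 hg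
    have hxi' : dist (τ g) (p i) ≤ r (p i) :=
      Metric.mem_closedBall.1 (Metric.closure_ball_subset_closedBall hxi)
    have hne : dist (τ g) (p i) ≠ r (p i) := hr3 _ (hbrick i hi) g
    exact hKint i hi (Metric.mem_ball.2 (lt_of_le_of_ne hxi' hne))

/-- The insertion lemma. -/
lemma insert_window [Countable G] [IsProbabilityMeasure ν] [NullSingletonClass ν]
    {Wl Wu : Set H} (hWl : Nice ν τ Wl) (hWu : Nice ν τ Wu)
    (hsub : Wl ⊆ Wu) {P : Set H} (hP : P.Finite) {γ : ℝ≥0∞}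
    (hγ : ν Wu ≤ ν Wl + γ) :
    ∃ V, Nice ν τ V ∧ Wl ⊆ V ∧ V ⊆ Wu ∧ ν V ≤ ν Wl + 2/3 * γ ∧
      ν Wu ≤ ν V + 2/3 * γ ∧ ∀ p ∈ P, p ∈ V → p ∈ Wl := by
  classical
  set U : Set H := interior Wu \ (Wl ∪ P) with hUdef
  have hUopen : IsOpen U := isOpen_interior.sdiff ((hWl.closed).union hP.isClosed)
  have hPnull : ν P = 0 := hP.countable.measure_zero ν
  have hintU : ν Wu ≤ ν Wl + ν U := by
    calc ν Wu = ν (interior Wu) := hWu.meas_interior.symm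
      _ ≤ ν ((Wl ∪ P) ∪ U) := by
          apply measure_mono
          intro x hx
          by_cases hc : x ∈ Wl ∪ P
          · exact Or.inl hc
          · exact Or.inr ⟨hx, hc⟩
      _ ≤ ν (Wl ∪ P) + ν U := measure_union_le _ _
      _ ≤ (ν Wl + ν P) + ν U := by gcongr; exact measure_union_le _ _
      _ = ν Wl + ν U := by rw [hPnull, add_zero]
  by_cases h0 : ν U = 0
  · refine ⟨Wl, hWl, le_refl _, hsub, le_self_add, ?_, fun p _ hp => hp⟩
    calc ν Wu ≤ ν Wl + ν U := hintU
      _ = ν Wl := by rw [h0, add_zero]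
      _ ≤ ν Wl + 2/3 * γ := le_self_add
  · have hUfin : ν U ≠ ∞ := measure_ne_top ν U
    have hlt : ν U / 3 < ν U := by
      calc ν U / 3 ≤ ν U / 2 := ENNReal.div_le_div_left (by norm_num) _
        _ < ν U := ENNReal.half_lt_self h0 hUfin
    have hηpos : (0 : ℝ≥0∞) < ν U / 3 := ENNReal.div_pos h0 (by norm_num)
    obtain ⟨K, hK, hKU, hKa, hKb⟩ := fill ν τ hUopen hηpos hlt
    have hKdisj : Disjoint Wl K := by
      rw [Set.disjoint_left]
      intro x hxW hxK
      exact (hKU hxK).2 (Or.inl hxW)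
    have hVmeas : ν (Wl ∪ K) = ν Wl + ν K := measure_union hKdisj hK.measurable
    have hUγ : ν U ≤ γ := by
      have hd : Disjoint Wl U := by
        rw [Set.disjoint_left]
        intro x hxW hxU
        exact hxU.2 (Or.inl hxW)
      have h1 : ν Wl + ν U = ν (Wl ∪ U) := (measure_union hd hUopen.measurableSet).symm
      have h2 : ν (Wl ∪ U) ≤ ν Wu := by
        apply measure_mono
        apply Set.union_subset hsub
        exact subset_trans Set.diff_subset interior_subset
      have := le_trans (le_trans h1.le h2) hγ
      exact (ENNReal.add_le_add_iff_left (measure_ne_top ν Wl)).1 this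
    have hthird : ν U / 3 + ν U / 3 ≤ 2/3 * γ := by
      have h1 : ν U / 3 + ν U / 3 = 2/3 * ν U := by
        rw [div_eq_mul_inv, div_eq_mul_inv]
        ring
      have h2 : (2:ℝ≥0∞)/3 * ν U ≤ 2/3 * γ := by gcongr
      rw [h1]; exact h2
    have hVid : ν U = ν U / 3 + (ν U / 3 + ν U / 3) := by
      rw [← ENNReal.add_div, ← ENNReal.add_div]
      rw [show ν U + (ν U + ν U) = 3 * ν U by ring, mul_div_assoc]
      exact (ENNReal.mul_div_cancel' (a := 3) (b := ν U) (by norm_num) (by norm_num)).symm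
    refine ⟨Wl ∪ K, hWl.union hK, Set.subset_union_left, ?_, ?_, ?_, ?_⟩
    · apply Set.union_subset hsub
      exact subset_trans hKU (subset_trans Set.diff_subset interior_subset)
    · rw [hVmeas]
      calc ν Wl + ν K ≤ ν Wl + (ν U / 3 + ν U / 3) := by gcongr
        _ ≤ ν Wl + 2/3 * γ := by gcongr
    · calc ν Wu ≤ ν Wl + ν U := hintU
        _ = ν Wl + (ν U / 3 + (ν U / 3 + ν U / 3)) := by rw [← hVid]
        _ = (ν Wl + ν U / 3) + (ν U / 3 + ν U / 3) := by ring
        _ ≤ (ν Wl + ν K) + 2/3 * γ := by gcongr <;> first | exact hKa.le | exact hthird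
        _ = ν (Wl ∪ K) + 2/3 * γ := by rw [hVmeas]
    · intro p hp hpV
      rcases hpV with h | h
      · exact h
      · exact absurd (Or.inr hp) (hKU h).2

/-- The invariant carried by each level of the dyadic chain. -/
def Inv (ν : Measure H) (τ : G → H) (n : ℕ) (f : ℕ → Set H) : Prop :=
  f 0 = ∅ ∧ (∀ i, 2^n ≤ i → f i = Set.univ) ∧ (∀ i j, i ≤ j → f i ⊆ f j) ∧
  (∀ i, Nice ν τ (f i)) ∧ (∀ i, ν (f (i+1)) ≤ ν (f i) + (2/3 : ℝ≥0∞)^n)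

/-- Relation between consecutive levels: coherence and protection of the first points. -/
def StepP (τ : G → H) (gs : ℕ → G) (n : ℕ) (f f' : ℕ → Set H) : Prop :=
  (∀ i, f' (2*i) = f i) ∧ ∀ k ≤ n, ∀ i, τ (gs k) ∈ f' (2*i+1) → τ (gs k) ∈ f i

lemma inv_base [IsProbabilityMeasure ν] :
    Inv ν τ 0 (fun i => if i = 0 then (∅ : Set H) else Set.univ) := by
  refine ⟨by simp, ?_, ?_, ?_, ?_⟩
  · intro i hi
    simp only [pow_zero] at hi
    simp [show i ≠ 0 by omega]
  · intro i j hij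
    by_cases h : i = 0
    · simp [h]
    · have : j ≠ 0 := by omega
      simp [h, this]
  · intro i
    by_cases h : i = 0
    · simpa [h] using nice_empty
    · simpa [h] using nice_univ
  · intro i
    simp only [pow_zero]
    by_cases h : i = 0
    · simp [h]
    · have : i + 1 ≠ 0 := by omega
      simp only [h, this, if_false]
      rw [measure_univ]
      exact le_add_self

lemma exists_step [Countable G] [IsProbabilityMeasure ν] [NullSingletonClass ν] (gs : ℕ → G) (n : ℕ)
    {f : ℕ → Set H} (hf : Inv ν τ n f) :
    ∃ f', Inv ν τ (n+1) f' ∧ StepP τ gs n f f' := by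
  classical
  obtain ⟨hf0, hftop, hfmono, hfnice, hfgap⟩ := hf
  have key : ∀ i : ℕ, ∃ V, Nice ν τ V ∧ f i ⊆ V ∧ V ⊆ f (i+1) ∧
      ν V ≤ ν (f i) + (2/3 : ℝ≥0∞)^(n+1) ∧ ν (f (i+1)) ≤ ν V + (2/3 : ℝ≥0∞)^(n+1) ∧
      ∀ k ≤ n, τ (gs k) ∈ V → τ (gs k) ∈ f i := by
    intro i
    have hP : ((fun k => τ (gs k)) '' (Set.Iic n)).Finite := (Set.finite_Iic n).image _
    obtain ⟨V, h1, h2, h3, h4, h5, h6⟩ := insert_window (hfnice i) (hfnice (i+1))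
      (hfmono i (i+1) (Nat.le_succ i)) hP (hfgap i)
    have hpow : (2/3 : ℝ≥0∞) * (2/3)^n = (2/3)^(n+1) := (pow_succ' (2/3 : ℝ≥0∞) n).symm
    refine ⟨V, h1, h2, h3, by rwa [hpow] at h4, by rwa [hpow] at h5, ?_⟩
    intro k hk hmem
    exact h6 _ (Set.mem_image_of_mem _ hk) hmem
  choose V hV1 hV2 hV3 hV4 hV5 hV6 using key
  set f' : ℕ → Set H := fun i => if i % 2 = 0 then f (i/2) else V (i/2) with hf'
  have heven : ∀ m, f' (2*m) = f m := by
    intro m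
    have h1 : (2*m) % 2 = 0 := by omega
    have h2 : (2*m) / 2 = m := by omega
    simp [hf', h1, h2]
  have hodd : ∀ m, f' (2*m+1) = V m := by
    intro m
    have h1 : (2*m+1) % 2 = 1 := by omega
    have h2 : (2*m+1) / 2 = m := by omega
    simp [hf', h1, h2]
  have hadj : ∀ i, f' i ⊆ f' (i+1) := by
    intro i
    rcases Nat.even_or_odd i with ⟨m, hm⟩ | ⟨m, hm⟩
    · subst hm
      rw [show m + m = 2*m by ring, heven, hodd]
      exact hV2 m
    · subst hm
      rw [show 2*m+1+1 = 2*(m+1) by ring, heven, hodd]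
      exact hV3 m
  refine ⟨f', ⟨?_, ?_, ?_, ?_, ?_⟩, heven, ?_⟩
  · rw [show (0:ℕ) = 2*0 by ring, heven]
    exact hf0
  · intro i hi
    have hpow : (2:ℕ)^(n+1) = 2^n * 2 := pow_succ 2 n
    rcases Nat.even_or_odd i with ⟨m, hm⟩ | ⟨m, hm⟩
    · subst hm
      rw [show m + m = 2*m by ring, heven]
      apply hftop
      omega
    · subst hm
      rw [hodd]
      apply Set.univ_subset_iff.1
      rw [← hftop m (by omega)]
      exact hV2 m
  · intro i j hij
    induction j with
    | zero => rw [Nat.le_zero.1 hij]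
    | succ jj ih =>
      rcases Nat.lt_succ_iff_lt_or_eq.1 (Nat.lt_succ_of_le hij) with h | h
      · exact subset_trans (ih (by omega)) (hadj jj)
      · subst h; rfl
  · intro i
    rcases Nat.even_or_odd i with ⟨m, hm⟩ | ⟨m, hm⟩
    · subst hm; rw [show m + m = 2*m by ring, heven]; exact hfnice m
    · subst hm; rw [hodd]; exact hV1 m
  · intro i
    rcases Nat.even_or_odd i with ⟨m, hm⟩ | ⟨m, hm⟩
    · subst hm
      rw [show m + m = 2*m by ring, heven, show 2*m+1 = 2*m+1 from rfl, hodd]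
      exact hV4 m
    · subst hm
      rw [hodd, show 2*m+1+1 = 2*(m+1) by ring, heven]
      exact hV5 m
  · intro k hk i hmem
    rw [hodd] at hmem
    exact hV6 i k hk hmem

noncomputable def chain [Countable G] (ν : Measure H) [IsProbabilityMeasure ν] [NullSingletonClass ν]
    (τ : G → H) (gs : ℕ → G) : (n : ℕ) → {f : ℕ → Set H // Inv ν τ n f}
  | 0 => ⟨_, inv_base⟩
  | (n+1) => ⟨Classical.choose (exists_step gs n (chain ν τ gs n).2),
      (Classical.choose_spec (exists_step gs n (chain ν τ gs n).2)).1⟩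

lemma chain_step [Countable G] (νv : Measure H) [IsProbabilityMeasure νv] [NullSingletonClass νv]
    (τv : G → H) (gs : ℕ → G) (n : ℕ) :
    StepP τv gs n (chain νv τv gs n).1 (chain νv τv gs (n+1)).1 :=
  (Classical.choose_spec (exists_step gs n (chain νv τv gs n).2)).2

section ChainFacts

variable [Countable G] (νv : Measure H) [IsProbabilityMeasure νv] [NullSingletonClass νv]
  (τv : G → H) (gs : ℕ → G)

/-- The dyadic family of windows. -/
noncomputable def Wc (n i : ℕ) : Set H := (chain νv τv gs n).1 i

lemma Wc_inv (n : ℕ) : Inv νv τv n (Wc νv τv gs n) := (chain νv τv gs n).2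

lemma Wc_zero (n : ℕ) : Wc νv τv gs n 0 = ∅ := (Wc_inv νv τv gs n).1

lemma Wc_top {n i : ℕ} (h : 2^n ≤ i) : Wc νv τv gs n i = Set.univ :=
  (Wc_inv νv τv gs n).2.1 i h

lemma Wc_mono {n i j : ℕ} (h : i ≤ j) : Wc νv τv gs n i ⊆ Wc νv τv gs n j :=
  (Wc_inv νv τv gs n).2.2.1 i j h

lemma Wc_nice (n i : ℕ) : Nice νv τv (Wc νv τv gs n i) := (Wc_inv νv τv gs n).2.2.2.1 i

lemma Wc_gap (n i : ℕ) :
    νv (Wc νv τv gs n (i+1)) ≤ νv (Wc νv τv gs n i) + (2/3 : ℝ≥0∞)^n :=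
  (Wc_inv νv τv gs n).2.2.2.2 i

lemma Wc_coh (n i : ℕ) : Wc νv τv gs (n+1) (2*i) = Wc νv τv gs n i :=
  (chain_step νv τv gs n).1 i

lemma Wc_prot {n k : ℕ} (hk : k ≤ n) (i : ℕ)
    (h : τv (gs k) ∈ Wc νv τv gs (n+1) (2*i+1)) : τv (gs k) ∈ Wc νv τv gs n i :=
  (chain_step νv τv gs n).2 k hk i h

lemma Wc_shift (n k i : ℕ) : Wc νv τv gs (n+k) (2^k * i) = Wc νv τv gs n i := by
  induction k with
  | zero => simp
  | succ m ih =>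
    have h1 : 2^(m+1) * i = 2 * (2^m * i) := by ring
    have h2 : n + (m+1) = (n+m)+1 := by ring
    rw [h2, h1, Wc_coh, ih]

lemma Wc_mono_pos {n i m j : ℕ} (h : (i:ℝ)/2^n ≤ (j:ℝ)/2^m) :
    Wc νv τv gs n i ⊆ Wc νv τv gs m j := by
  have hkey : i * 2^m ≤ j * 2^n := by
    have h2n : (0:ℝ) < 2^n := by positivity
    have h2m : (0:ℝ) < 2^m := by positivity
    rw [div_le_div_iff₀ h2n h2m] at h
    exact_mod_cast h
  have e1 : Wc νv τv gs n i = Wc νv τv gs (n+m) (2^m * i) := (Wc_shift νv τv gs n m i).symm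
  have e2 : Wc νv τv gs m j = Wc νv τv gs (n+m) (2^n * j) := by
    rw [show n+m = m+n by ring]
    exact (Wc_shift νv τv gs m n j).symm
  rw [e1, e2]
  apply Wc_mono
  calc 2^m * i = i * 2^m := by ring
    _ ≤ j * 2^n := hkey
    _ = 2^n * j := by ring

lemma Wc_steps (n i k : ℕ) :
    νv (Wc νv τv gs n (i+k)) ≤ νv (Wc νv τv gs n i) + (k : ℝ≥0∞) * (2/3 : ℝ≥0∞)^n := by
  induction k with
  | zero => simp
  | succ m ih =>
    have h1 : i + (m+1) = (i+m)+1 := by ring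
    calc νv (Wc νv τv gs n (i+(m+1))) = νv (Wc νv τv gs n ((i+m)+1)) := by rw [h1]
      _ ≤ νv (Wc νv τv gs n (i+m)) + (2/3 : ℝ≥0∞)^n := Wc_gap νv τv gs n (i+m)
      _ ≤ (νv (Wc νv τv gs n i) + (m : ℝ≥0∞) * (2/3)^n) + (2/3)^n := by gcongr
      _ = νv (Wc νv τv gs n i) + ((m : ℝ≥0∞) + 1) * (2/3)^n := by ring
      _ = νv (Wc νv τv gs n i) + ((m+1 : ℕ) : ℝ≥0∞) * (2/3)^n := by push_cast; ring

/-- Minimal-position lemma: if `τ (gs k)` belongs to every window strictly above level `t`,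
then it belongs to some window at position at most `t`. -/
lemma Wc_min (k : ℕ) (t : ℝ)
    (hcov : ∀ (n i : ℕ), t < (i:ℝ)/2^n → τv (gs k) ∈ Wc νv τv gs n i) :
    ∃ n i : ℕ, (i:ℝ)/2^n ≤ t ∧ τv (gs k) ∈ Wc νv τv gs n i := by
  classical
  have hex : ∀ m : ℕ, ∃ i, τv (gs k) ∈ Wc νv τv gs m i := fun m =>
    ⟨2^m, by rw [Wc_top νv τv gs (le_refl _)]; trivial⟩
  have hQmem : ∀ m, τv (gs k) ∈ Wc νv τv gs m (Nat.find (hex m)) := fun m =>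
    Nat.find_spec (hex m)
  have hQmin : ∀ m j, j < Nat.find (hex m) → τv (gs k) ∉ Wc νv τv gs m j := fun m j hj =>
    Nat.find_min (hex m) hj
  have hQpos : ∀ m, 0 < Nat.find (hex m) := by
    intro m
    rcases Nat.eq_zero_or_pos (Nat.find (hex m)) with h0 | h
    · have := hQmem m
      rw [h0, Wc_zero] at this
      exact absurd this (Set.notMem_empty _)
    · exact h
  have hstab : ∀ m, k ≤ m → Nat.find (hex (m+1)) = 2 * Nat.find (hex m) := by
    intro m hm
    have hle : Nat.find (hex (m+1)) ≤ 2 * Nat.find (hex m) := by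
      apply Nat.find_le
      rw [Wc_coh]
      exact hQmem m
    have hge : 2 * Nat.find (hex m) ≤ Nat.find (hex (m+1)) := by
      by_contra hcon
      push_neg at hcon
      rcases Nat.even_or_odd (Nat.find (hex (m+1))) with ⟨j, hj⟩ | ⟨j, hj⟩
      · have hmem : τv (gs k) ∈ Wc νv τv gs m j := by
          have := hQmem (m+1)
          rw [hj, show j + j = 2*j by ring, Wc_coh] at this
          exact this
        exact hQmin m j (by omega) hmem
      · have hmem : τv (gs k) ∈ Wc νv τv gs (m+1) (2*j+1) := by
          have := hQmem (m+1)
          rwa [hj] at this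
        have hmem2 := Wc_prot νv τv gs hm j hmem
        exact hQmin m j (by omega) hmem2
    omega
  have hconst : ∀ m, k ≤ m → ((Nat.find (hex m) : ℝ)/2^m) = (Nat.find (hex k) : ℝ)/2^k := by
    intro m hm
    induction m, hm using Nat.le_induction with
    | base => rfl
    | succ m hm ih =>
      rw [hstab m hm, ← ih]
      push_cast
      rw [pow_succ]
      field_simp
  by_cases hcle : (Nat.find (hex k) : ℝ)/2^k ≤ t
  · exact ⟨k, Nat.find (hex k), hcle, hQmem k⟩
  · exfalso
    push_neg at hcle
    obtain ⟨m₀, hm₀⟩ : ∃ m₀ : ℕ, (1:ℝ)/2^m₀ < (Nat.find (hex k) : ℝ)/2^k - t := by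
      obtain ⟨m₀, hm₀⟩ := exists_pow_lt_of_lt_one
        (by linarith : (0:ℝ) < (Nat.find (hex k) : ℝ)/2^k - t)
        (by norm_num : (1:ℝ)/2 < 1)
      refine ⟨m₀, ?_⟩
      rw [div_pow, one_pow] at hm₀
      exact hm₀
    have hmk : k ≤ max k m₀ := le_max_left _ _
    have hq : (Nat.find (hex (max k m₀)) : ℝ)/2^(max k m₀) = (Nat.find (hex k) : ℝ)/2^k :=
      hconst (max k m₀) hmk
    have hQm1 : 1 ≤ Nat.find (hex (max k m₀)) := hQpos (max k m₀)
    have hstep : (1:ℝ)/2^(max k m₀) ≤ 1/2^m₀ := by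
      gcongr
      · norm_num
      · exact le_max_right _ _
    have hpos : t < ((Nat.find (hex (max k m₀)) - 1 : ℕ) : ℝ)/2^(max k m₀) := by
      have hcast : ((Nat.find (hex (max k m₀)) - 1 : ℕ) : ℝ)
          = (Nat.find (hex (max k m₀)) : ℝ) - 1 := by
        push_cast [hQm1]
        ring
      rw [hcast]
      have hsplit : ((Nat.find (hex (max k m₀)) : ℝ) - 1)/2^(max k m₀)
          = (Nat.find (hex (max k m₀)) : ℝ)/2^(max k m₀) - 1/2^(max k m₀) := by ring
      rw [hsplit, hq]
      have : (1:ℝ)/2^(max k m₀) < (Nat.find (hex k) : ℝ)/2^k - t :=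
        lt_of_le_of_lt hstep hm₀
      linarith
    have := hcov (max k m₀) (Nat.find (hex (max k m₀)) - 1) hpos
    exact hQmin (max k m₀) (Nat.find (hex (max k m₀)) - 1) (by omega) this

/-- The cumulative measure function. -/
noncomputable def mbar (t : ℝ) : ℝ≥0∞ :=
  ⨆ (p : ℕ × ℕ) (_ : (p.2:ℝ)/2^p.1 < t), νv (Wc νv τv gs p.1 p.2)

lemma le_mbar {n i : ℕ} {t : ℝ} (h : (i:ℝ)/2^n < t) :
    νv (Wc νv τv gs n i) ≤ mbar νv τv gs t :=
  le_iSup₂ (f := fun (p : ℕ × ℕ) (_ : (p.2:ℝ)/2^p.1 < t) => νv (Wc νv τv gs p.1 p.2))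
    (⟨n, i⟩ : ℕ × ℕ) h

lemma mbar_le {t : ℝ} {x : ℝ≥0∞} (h : ∀ (n i : ℕ), (i:ℝ)/2^n < t → νv (Wc νv τv gs n i) ≤ x) :
    mbar νv τv gs t ≤ x :=
  iSup₂_le (fun p hp => h p.1 p.2 hp)

lemma mbar_mono {s t : ℝ} (h : s ≤ t) : mbar νv τv gs s ≤ mbar νv τv gs t :=
  mbar_le νv τv gs (fun n i hi => le_mbar νv τv gs (lt_of_lt_of_le hi h))

lemma mbar_zero : mbar νv τv gs 0 = 0 := by
  apply le_antisymm ?_ zero_le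
  apply mbar_le
  intro n i hi
  exact absurd hi (by push_neg; positivity)

lemma W_floor_le (n : ℕ) {t : ℝ} (ht : 0 ≤ t) :
    νv (Wc νv τv gs n (Nat.floor (t * 2^n))) ≤ mbar νv τv gs t + (2/3 : ℝ≥0∞)^n := by
  by_cases hl : ((Nat.floor (t * 2^n) : ℕ) : ℝ)/2^n < t
  · exact le_trans (le_mbar νv τv gs hl) le_self_add
  · rcases Nat.eq_zero_or_pos (Nat.floor (t * 2^n)) with h0 | hpos
    · rw [h0, Wc_zero]
      simp
    · obtain ⟨ll, hll⟩ : ∃ ll, Nat.floor (t * 2^n) = ll + 1 :=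
        ⟨Nat.floor (t * 2^n) - 1, by omega⟩
      have hfl : ((Nat.floor (t * 2^n) : ℕ) : ℝ) ≤ t * 2^n :=
        Nat.floor_le (by positivity)
      have hll2 : (ll:ℝ)/2^n < t := by
        rw [hll] at hfl
        push_cast at hfl
        rw [div_lt_iff₀ (by positivity : (0:ℝ) < 2^n)]
        linarith
      rw [hll]
      calc νv (Wc νv τv gs n (ll+1)) ≤ νv (Wc νv τv gs n ll) + (2/3 : ℝ≥0∞)^n :=
            Wc_gap νv τv gs n ll
        _ ≤ mbar νv τv gs t + (2/3 : ℝ≥0∞)^n := by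
            gcongr
            exact le_mbar νv τv gs hll2

/-- Modulus of continuity for `mbar`. -/
lemma mbar_mod {s t : ℝ} (hs : 0 ≤ s) (hst : s ≤ t) (n : ℕ) (hn : t ≤ s + (1/2)^n) :
    mbar νv τv gs t ≤ mbar νv τv gs s + 4 * (2/3 : ℝ≥0∞)^n := by
  apply mbar_le
  intro N i hi
  set x : ℝ := (i:ℝ)/2^N with hxdef
  have hx0 : 0 ≤ x := by positivity
  set j := Nat.ceil (x * 2^n) with hjdef
  have hWsub : Wc νv τv gs N i ⊆ Wc νv τv gs n j := by
    apply Wc_mono_pos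
    rw [le_div_iff₀ (by positivity : (0:ℝ) < 2^n)]
    exact Nat.le_ceil _
  set l := Nat.floor (s * 2^n) with hldef
  have hjl : j ≤ l + 2 := by
    have h1 : (j:ℝ) < x * 2^n + 1 := Nat.ceil_lt_add_one (by positivity)
    have h2 : x < t := hi
    have h2n : (0:ℝ) < 2^n := by positivity
    have h3 : t * 2^n ≤ s * 2^n + 1 := by
      have := mul_le_mul_of_nonneg_right hn (le_of_lt h2n)
      have hone : ((1:ℝ)/2)^n * 2^n = 1 := by
        rw [div_pow, one_pow]
        field_simp
      nlinarith
    have h4 : s * 2^n < (l:ℝ) + 1 := Nat.lt_floor_add_one _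
    have h5 : (j:ℝ) < (l:ℝ) + 3 := by nlinarith
    have h6 : j < l + 3 := by exact_mod_cast h5
    omega
  calc νv (Wc νv τv gs N i) ≤ νv (Wc νv τv gs n j) := measure_mono hWsub
    _ ≤ νv (Wc νv τv gs n (l+2)) := measure_mono (Wc_mono νv τv gs hjl)
    _ ≤ νv (Wc νv τv gs n l) + 2 * (2/3 : ℝ≥0∞)^n := by
        have := Wc_steps νv τv gs n l 2
        push_cast at this
        exact this
    _ ≤ (mbar νv τv gs s + (2/3 : ℝ≥0∞)^n) + 2 * (2/3 : ℝ≥0∞)^n := by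
        gcongr
        exact W_floor_le νv τv gs n hs
    _ = mbar νv τv gs s + 3 * (2/3 : ℝ≥0∞)^n := by ring
    _ ≤ mbar νv τv gs s + 4 * (2/3 : ℝ≥0∞)^n := by gcongr <;> norm_num

/-- The limiting window from above at level `t`. -/
noncomputable def MM (t : ℝ) : Set H :=
  ⋂ (p : ℕ × ℕ) (_ : t < (p.2:ℝ)/2^p.1), Wc νv τv gs p.1 p.2

lemma MM_closed (t : ℝ) : IsClosed (MM νv τv gs t) :=
  isClosed_iInter fun p => isClosed_iInter fun _ => (Wc_nice νv τv gs p.1 p.2).closed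

lemma MM_mono {s t : ℝ} (h : s ≤ t) : MM νv τv gs s ⊆ MM νv τv gs t := by
  intro x hx
  apply Set.mem_iInter₂.2
  intro p hp
  exact Set.mem_iInter₂.1 hx p (lt_of_le_of_lt h hp)

lemma MM_subset {t : ℝ} {n i : ℕ} (h : t < (i:ℝ)/2^n) :
    MM νv τv gs t ⊆ Wc νv τv gs n i :=
  fun _ hx => Set.mem_iInter₂.1 hx (⟨n, i⟩ : ℕ × ℕ) h

lemma subset_MM {t : ℝ} {n i : ℕ} (h : (i:ℝ)/2^n ≤ t) :
    Wc νv τv gs n i ⊆ MM νv τv gs t := by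
  intro x hx
  apply Set.mem_iInter₂.2
  intro p hp
  exact Wc_mono_pos νv τv gs (le_of_lt (lt_of_le_of_lt h hp)) hx

lemma mbar_le_int (t : ℝ) : mbar νv τv gs t ≤ νv (interior (MM νv τv gs t)) := by
  apply mbar_le
  intro n i hi
  rw [← (Wc_nice νv τv gs n i).meas_interior]
  exact measure_mono (interior_mono (subset_MM νv τv gs (le_of_lt hi)))

lemma MM_meas_le (n : ℕ) {t : ℝ} (ht : 0 ≤ t) :
    νv (MM νv τv gs t) ≤ mbar νv τv gs t + 2 * (2/3 : ℝ≥0∞)^n := by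
  set l := Nat.floor (t * 2^n) with hldef
  have hpos : t < ((l+1 : ℕ) : ℝ)/2^n := by
    rw [lt_div_iff₀ (by positivity : (0:ℝ) < 2^n)]
    push_cast
    exact Nat.lt_floor_add_one _
  calc νv (MM νv τv gs t) ≤ νv (Wc νv τv gs n (l+1)) :=
        measure_mono (MM_subset νv τv gs hpos)
    _ ≤ νv (Wc νv τv gs n l) + (2/3 : ℝ≥0∞)^n := Wc_gap νv τv gs n l
    _ ≤ (mbar νv τv gs t + (2/3 : ℝ≥0∞)^n) + (2/3 : ℝ≥0∞)^n := by
        gcongr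
        exact W_floor_le νv τv gs n ht
    _ = mbar νv τv gs t + 2 * (2/3 : ℝ≥0∞)^n := by ring

lemma MM_meas {t : ℝ} (ht : 0 ≤ t) :
    νv (MM νv τv gs t) = mbar νv τv gs t ∧
    νv (interior (MM νv τv gs t)) = mbar νv τv gs t := by
  have hup : νv (MM νv τv gs t) ≤ mbar νv τv gs t := by
    have h1 : Tendsto (fun n : ℕ => (2/3 : ℝ≥0∞)^n) atTop (𝓝 0) :=
      ENNReal.tendsto_pow_atTop_nhds_zero_of_lt_one (by
        rw [ENNReal.div_lt_iff (Or.inl (by norm_num)) (Or.inl (by norm_num))]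
        norm_num)
    have h2 : Tendsto (fun n : ℕ => 2 * (2/3 : ℝ≥0∞)^n) atTop (𝓝 0) := by
      have := ENNReal.Tendsto.const_mul (a := 2) h1 (Or.inr (by norm_num))
      simpa using this
    have h3 : Tendsto (fun n : ℕ => mbar νv τv gs t + 2 * (2/3 : ℝ≥0∞)^n) atTop
        (𝓝 (mbar νv τv gs t)) := by
      have := Tendsto.const_add (mbar νv τv gs t) h2
      simpa using this
    exact ge_of_tendsto' h3 (fun n => MM_meas_le νv τv gs n ht)
  have hlow := mbar_le_int νv τv gs t
  have h1 : νv (interior (MM νv τv gs t)) ≤ νv (MM νv τv gs t) :=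
    measure_mono interior_subset
  exact ⟨le_antisymm hup (le_trans hlow h1), le_antisymm (le_trans h1 hup) hlow⟩

end ChainFacts

end S15
/-- Extended logarithm of an `ℝ≥0∞` value, with `eLog 0 = ⊥` and `eLog ⊤ = ⊤`. -/
noncomputable def eLog (x : ℝ≥0∞) : EReal :=
  if x = 0 then ⊥ else if x = ⊤ then ⊤ else ((Real.log x.toReal : ℝ) : EReal)

/-- Maximal cardinality (in `ℝ≥0∞`) of an `ε`-separated subset of `S` w.r.t. `d`. -/
noncomputable def sepCount {Z : Type*} (S : Set Z) (d : Z → Z → ℝ) (ε : ℝ) : ℝ≥0∞ :=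
  ⨆ (A : Finset Z) (_ : ↑A ⊆ S ∧ (A : Set Z).Pairwise fun z z' => ε ≤ d z z'), (A.card : ℝ≥0∞)

/-- The quantity `log Sep(S, d, ε) / (- log ε)`, as an extended real. -/
noncomputable def acRatio {Z : Type*} (S : Set Z) (d : Z → Z → ℝ) (ε : ℝ) : EReal :=
  eLog (sepCount S d ε) * (((-Real.log ε)⁻¹ : ℝ) : EReal)

open Classical in
/-- `F` is a left Følner sequence in the group `G`. -/
def IsFolner {G : Type*} [Group G] (F : ℕ → Finset G) : Prop :=
  (∀ n, (F n).Nonempty) ∧ ∀ g : G,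
    Filter.Tendsto
      (fun n => ((((F n).image fun h => g * h) ∆ F n).card : ℝ) / ((F n).card : ℝ))
      Filter.atTop (nhds 0)

/-- The Besicovitch pseudometric w.r.t. the sequence `F`. -/
noncomputable def besicovitchDist {G : Type*} (F : ℕ → Finset G) (x y : G → Bool) : ℝ :=
  Filter.limsup (fun n => (((F n).filter fun g => x g ≠ y g).card : ℝ) / ((F n).card : ℝ))
    Filter.atTop

open Classical in
/-- The symbolic model set (as a 0-1 array) associated to a window `W ⊆ H`. -/
noncomputable def modelSet {G H : Type*} (τ : G → H) (W : Set H) : G → Bool :=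
  fun g => decide (τ g ∈ W)

/-- Orbit closure of `x` under the left shift `(g·x)(h) = x(hg)`, in the product topology. -/
def shiftOrbitClosure {G : Type*} [Group G] (x : G → Bool) : Set (G → Bool) :=
  closure { y : G → Bool | ∃ g : G, y = fun h => x (h * g) }

/-- `Per(x, Γ, α)`, the set of `Γ`-periodic positions of `x` with value `α`. -/
def perA {G : Type*} [Group G] (x : G → Bool) (Γ : Subgroup G) (α : Bool) : Set G :=
  { g : G | ∀ γ ∈ Γ, x (g * γ) = α }

/-- `Per(x, Γ) = Per(x,Γ,0) ∪ Per(x,Γ,1)`. -/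
def perSet {G : Type*} [Group G] (x : G → Bool) (Γ : Subgroup G) : Set G :=
  perA x Γ false ∪ perA x Γ true

/-- `E` is a fundamental domain of `G/Γ`: `g ↦ gΓ` is a bijection from `E` onto `G/Γ`. -/
def IsFundDom {G : Type*} [Group G] (Γ : Subgroup G) (E : Finset G) : Prop :=
  ∀ g : G, ∃! d, d ∈ E ∧ g⁻¹ * d ∈ Γ

/-- The density `D(x,Γ)` of `Per(x,Γ)` computed in a fundamental domain `E`. -/
noncomputable def perDensity {G : Type*} [Group G] (x : G → Bool) (Γ : Subgroup G)
    (E : Finset G) : ℝ :=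
  (((E : Set G) ∩ perSet x Γ).ncard : ℝ) / (E.card : ℝ)

/-- The regularity constant `𝒟(x)`. -/
noncomputable def regConst {G : Type*} [Group G] (x : G → Bool) : ℝ :=
  sSup { r : ℝ | ∃ (Γ : Subgroup G) (E : Finset G),
    Γ.FiniteIndex ∧ IsFundDom Γ E ∧ r = perDensity x Γ E }

/-- there is a `D̄`-continuous path of proper, generic, regular windows from `∅`
to `H`. -/
theorem stmt_15 {G : Type*} [Group G] [Countable G] [Infinite G]
    {H : Type*} [Group H] [MetricSpace H] [IsTopologicalGroup H] [CompactSpace H]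
    [MeasurableSpace H] [BorelSpace H]
    (hinv : ∀ a x y : H, dist (a * x) (a * y) = dist x y)
    (ν : Measure H) [ν.IsHaarMeasure] [IsProbabilityMeasure ν]
    (τ : G →* H) (hinj : Function.Injective ⇑τ) (hdense : DenseRange ⇑τ) :
    ∃ A : ℝ → Set H,
      A 0 = ∅ ∧ A 1 = Set.univ ∧
      (∀ t ∈ Set.Icc (0 : ℝ) 1, IsCompact (A t) ∧ A t = closure (interior (A t)) ∧
        frontier (A t) ∩ Set.range ⇑τ = ∅ ∧ ν (frontier (A t)) = 0) ∧
      (∀ ε > (0 : ℝ), ∃ δ > (0 : ℝ), ∀ t ∈ Set.Icc (0 : ℝ) 1, ∀ s ∈ Set.Icc (0 : ℝ) 1,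
        |t - s| < δ → (ν (closure (A t ∆ A s))).toReal < ε) := by
  classical
  haveI : Infinite H := Infinite.of_injective (⇑τ) hinj
  -- the Haar measure has no atoms
  have hsingle : ∀ x : H, ν {x} = 0 := by
    have heq : ∀ x : H, ν {x} = ν {(1:H)} := by
      intro x
      have hset : ((fun h => x * h) ⁻¹' {x} : Set H) = {1} := by
        ext y
        simp only [Set.mem_preimage, Set.mem_singleton_iff]
        constructor
        · intro h
          have h1 : x * y = x * 1 := by rw [mul_one]; exact h
          exact mul_left_cancel h1
        · intro h; rw [h, mul_one]
      have := measure_preimage_mul ν x ({x} : Set H)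
      rw [hset] at this
      exact this.symm
    by_contra hcon
    push_neg at hcon
    obtain ⟨x, hx⟩ := hcon
    have hone : ν {(1:H)} ≠ 0 := by rw [← heq x]; exact hx
    set f := Infinite.natEmbedding H with hf
    have hdisj : Pairwise (Function.onFun Disjoint fun n : ℕ => ({f n} : Set H)) := by
      intro a b hab
      simp only [Function.onFun, Set.disjoint_singleton]
      exact f.injective.ne hab
    have hU : ν (⋃ n : ℕ, ({f n} : Set H)) = ∑' n : ℕ, ν {f n} :=
      measure_iUnion hdisj (fun n => measurableSet_singleton _)
    have htop : ∑' n : ℕ, ν {f n} = ⊤ := by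
      rw [tsum_congr (fun n => heq (f n))]
      exact ENNReal.tsum_const_eq_top_of_ne_zero hone
    have hle : ν (⋃ n : ℕ, ({f n} : Set H)) ≤ 1 := by
      rw [← measure_univ (μ := ν)]
      exact measure_mono (Set.subset_univ _)
    rw [hU, htop] at hle
    exact absurd hle (by simp)
  haveI : MeasureTheory.NullSingletonClass ν := ⟨hsingle⟩
  obtain ⟨gs, hgs⟩ := exists_surjective_nat G
  -- the path
  refine ⟨fun t => closure (interior (S15.MM ν (⇑τ) gs t)), ?_, ?_, ?_, ?_⟩
  · -- A 0 = ∅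
    beta_reduce
    have hM0 : ν (S15.MM ν (⇑τ) gs 0) = 0 := by
      rw [(S15.MM_meas ν (⇑τ) gs le_rfl).1, S15.mbar_zero]
    have hint : interior (S15.MM ν (⇑τ) gs 0) = ∅ := by
      by_contra hne
      obtain ⟨x, hx⟩ := Set.nonempty_iff_ne_empty.2 hne
      have hpos : 0 < ν (interior (S15.MM ν (⇑τ) gs 0)) :=
        (isOpen_interior).measure_pos ν ⟨x, hx⟩
      have hle : ν (interior (S15.MM ν (⇑τ) gs 0)) ≤ ν (S15.MM ν (⇑τ) gs 0) :=
        measure_mono interior_subset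
      rw [hM0] at hle
      exact absurd (lt_of_lt_of_le hpos hle) (by simp)
    rw [hint]
    exact closure_empty
  · -- A 1 = univ
    beta_reduce
    have hM1 : S15.MM ν (⇑τ) gs 1 = Set.univ := by
      rw [Set.eq_univ_iff_forall]
      intro x
      apply Set.mem_iInter₂.2
      intro p hp
      have h2 : (2:ℝ)^p.1 < (p.2 : ℝ) := by
        rw [lt_div_iff₀ (by positivity : (0:ℝ) < 2^p.1)] at hp
        linarith
      have hle : 2^p.1 ≤ p.2 := by exact_mod_cast h2.le
      rw [S15.Wc_top ν (⇑τ) gs hle]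
      trivial
    rw [hM1]
    simp
  · -- window properties
    intro t ht
    beta_reduce
    have hAclosed : IsClosed (closure (interior (S15.MM ν (⇑τ) gs t))) := isClosed_closure
    have hAsubM : closure (interior (S15.MM ν (⇑τ) gs t)) ⊆ S15.MM ν (⇑τ) gs t :=
      closure_minimal interior_subset (S15.MM_closed ν (⇑τ) gs t)
    have hintMA : interior (S15.MM ν (⇑τ) gs t) ⊆
        interior (closure (interior (S15.MM ν (⇑τ) gs t))) :=
      interior_maximal subset_closure isOpen_interior
    have hfr : frontier (closure (interior (S15.MM ν (⇑τ) gs t))) ⊆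
        S15.MM ν (⇑τ) gs t \ interior (S15.MM ν (⇑τ) gs t) := by
      rw [hAclosed.frontier_eq]
      exact Set.diff_subset_diff hAsubM hintMA
    refine ⟨hAclosed.isCompact, ?_, ?_, ?_⟩
    · apply subset_antisymm
      · exact closure_mono hintMA
      · exact closure_minimal interior_subset isClosed_closure
    · rw [Set.eq_empty_iff_forall_notMem]
      rintro x ⟨hxf, g, rfl⟩
      obtain ⟨k, rfl⟩ := hgs g
      have hxM : τ (gs k) ∈ S15.MM ν (⇑τ) gs t := (hfr hxf).1
      have hxnotint : τ (gs k) ∉ interior (S15.MM ν (⇑τ) gs t) := (hfr hxf).2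
      have hcov : ∀ (n i : ℕ), t < (i:ℝ)/2^n → τ (gs k) ∈ S15.Wc ν (⇑τ) gs n i :=
        fun n i hi => S15.MM_subset ν (⇑τ) gs hi hxM
      obtain ⟨n, i, hni, hmem⟩ := S15.Wc_min ν (⇑τ) gs k t hcov
      have hint : τ (gs k) ∈ interior (S15.Wc ν (⇑τ) gs n i) :=
        (S15.Wc_nice ν (⇑τ) gs n i).gen _ hmem
      exact hxnotint (interior_mono (S15.subset_MM ν (⇑τ) gs hni) hint)
    · apply measure_mono_null hfr
      rw [measure_diff interior_subset
        (isOpen_interior.measurableSet.nullMeasurableSet) (measure_ne_top ν _)]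
      rw [(S15.MM_meas ν (⇑τ) gs ht.1).1, (S15.MM_meas ν (⇑τ) gs ht.1).2]
      exact tsub_self _
  · -- continuity
    intro ε hε
    obtain ⟨n, hn⟩ : ∃ n : ℕ, 4 * (2/3:ℝ≥0∞)^n < ENNReal.ofReal ε := by
      have h1 : Filter.Tendsto (fun n : ℕ => (2/3 : ℝ≥0∞)^n) Filter.atTop (nhds 0) :=
        ENNReal.tendsto_pow_atTop_nhds_zero_of_lt_one (by
          rw [ENNReal.div_lt_iff (Or.inl (by norm_num)) (Or.inl (by norm_num))]
          norm_num)
      have h2 : Filter.Tendsto (fun n : ℕ => 4 * (2/3 : ℝ≥0∞)^n) Filter.atTop (nhds 0) := by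
        have := ENNReal.Tendsto.const_mul (a := 4) h1 (Or.inr (by norm_num))
        simpa using this
      exact (h2.eventually_lt_const (ENNReal.ofReal_pos.2 hε)).exists
    refine ⟨(1/2:ℝ)^n, by positivity, ?_⟩
    have key : ∀ u v : ℝ, 0 ≤ v → v ≤ u → u ≤ v + (1/2)^n →
        (ν (closure ((closure (interior (S15.MM ν (⇑τ) gs u))) ∆
          (closure (interior (S15.MM ν (⇑τ) gs v)))))).toReal < ε := by
      intro u v hv hvu huv
      have hsub : closure (interior (S15.MM ν (⇑τ) gs v)) ⊆
          closure (interior (S15.MM ν (⇑τ) gs u)) :=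
        closure_mono (interior_mono (S15.MM_mono ν (⇑τ) gs hvu))
      have hΔ : (closure (interior (S15.MM ν (⇑τ) gs u))) ∆
          (closure (interior (S15.MM ν (⇑τ) gs v)))
          = (closure (interior (S15.MM ν (⇑τ) gs u))) \
            (closure (interior (S15.MM ν (⇑τ) gs v))) := by
        rw [symmDiff_comm]
        exact symmDiff_of_le hsub
      have hclosed : IsClosed (S15.MM ν (⇑τ) gs u \ interior (S15.MM ν (⇑τ) gs v)) :=
        (S15.MM_closed ν (⇑τ) gs u).sdiff isOpen_interior
      have hsub2 : closure ((closure (interior (S15.MM ν (⇑τ) gs u))) ∆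
          (closure (interior (S15.MM ν (⇑τ) gs v)))) ⊆
          S15.MM ν (⇑τ) gs u \ interior (S15.MM ν (⇑τ) gs v) := by
        rw [hΔ]
        apply closure_minimal ?_ hclosed
        intro x hx
        refine ⟨closure_minimal interior_subset (S15.MM_closed ν (⇑τ) gs u) hx.1, ?_⟩
        intro hc
        exact hx.2 (subset_closure hc)
      have hmeas : ν (S15.MM ν (⇑τ) gs u \ interior (S15.MM ν (⇑τ) gs v)) =
          ν (S15.MM ν (⇑τ) gs u) - ν (interior (S15.MM ν (⇑τ) gs v)) := by
        apply measure_diff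
        · exact subset_trans interior_subset (S15.MM_mono ν (⇑τ) gs hvu)
        · exact isOpen_interior.measurableSet.nullMeasurableSet
        · exact measure_ne_top ν _
      have hbound : ν (S15.MM ν (⇑τ) gs u \ interior (S15.MM ν (⇑τ) gs v)) ≤
          4 * (2/3:ℝ≥0∞)^n := by
        rw [hmeas, (S15.MM_meas ν (⇑τ) gs (le_trans hv hvu)).1, (S15.MM_meas ν (⇑τ) gs hv).2]
        rw [tsub_le_iff_right, add_comm]
        exact S15.mbar_mod ν (⇑τ) gs hv hvu n huv
      have hfin : ν (closure ((closure (interior (S15.MM ν (⇑τ) gs u))) ∆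
          (closure (interior (S15.MM ν (⇑τ) gs v))))) < ENNReal.ofReal ε :=
        lt_of_le_of_lt (le_trans (measure_mono hsub2) hbound) hn
      exact (ENNReal.lt_ofReal_iff_toReal_lt (measure_ne_top ν _)).1 hfin
    intro t ht s hs hts
    beta_reduce
    rcases le_total s t with h | h
    · apply key t s hs.1 h
      have := abs_lt.1 hts
      linarith
    · rw [symmDiff_comm]
      apply key s t ht.1 h
      have := abs_lt.1 hts
      linarith
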